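/- arXiv:1412.5376 — 2 statements merged into one kernel-verified Lean document; each statement's English description precedes it below -/
import Mathlib

section
/- Suppose additionally that within each row the X_{n,1}, …, X_{n,n} are independent, and define G_n(θ,z) := (nΔ_n)^{−1/2} Σ_{j=1}^{⌊nθ⌋} ( 1_{{X_{n,j} ≥ z}} − P_n(X_{n,j} ≥ z) ). Then for all θ_1, θ_2 ∈ [0,1] and all z_1, z_2 ≥ a, E[ G_n(θ_1,z_1) · G_n(θ_2,z_2) ] → (θ_1 ∧ θ_2) · ν(z_1 ∨ z_2) as n → ∞. -/
open MeasureTheory Filter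

private lemma aux_cov {Ω : Type*} [MeasurableSpace Ω] (μ : Measure Ω) [IsProbabilityMeasure μ]
    {n : ℕ} (X : Fin n → Ω → ℝ) (hX : ∀ j, Measurable (X j))
    (hindep : ProbabilityTheory.iIndepFun X μ)
    (z₁ z₂ : ℝ) (m₁ m₂ : ℕ) :
    ∫ ω, (∑ j : Fin n, (if (j : ℕ) < m₁ then
          ((if z₁ ≤ X j ω then (1 : ℝ) else 0) - (μ {ω' | z₁ ≤ X j ω'}).toReal) else 0)) *
        (∑ j : Fin n, (if (j : ℕ) < m₂ then
          ((if z₂ ≤ X j ω then (1 : ℝ) else 0) - (μ {ω' | z₂ ≤ X j ω'}).toReal) else 0)) ∂μ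
    = ∑ j : Fin n, (if (j : ℕ) < min m₁ m₂ then
        (μ {ω' | max z₁ z₂ ≤ X j ω'}).toReal
          - (μ {ω' | z₁ ≤ X j ω'}).toReal * (μ {ω' | z₂ ≤ X j ω'}).toReal else 0) := by
  have hmeas : ∀ (z : ℝ) (j : Fin n), MeasurableSet {ω' | z ≤ X j ω'} :=
    fun z j => measurableSet_le measurable_const (hX j)
  have hind_eq : ∀ (z : ℝ) (j : Fin n),
      (fun ω => if z ≤ X j ω then (1:ℝ) else 0)
        = Set.indicator {ω' | z ≤ X j ω'} (fun _ => (1:ℝ)) := by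
    intro z j; funext ω; simp [Set.indicator_apply, Set.mem_setOf_eq]
  have hint : ∀ (z : ℝ) (j : Fin n),
      Integrable (fun ω => if z ≤ X j ω then (1:ℝ) else 0) μ := by
    intro z j; rw [hind_eq]; exact (integrable_const 1).indicator (hmeas z j)
  have hival : ∀ (z : ℝ) (j : Fin n),
      ∫ ω, (if z ≤ X j ω then (1:ℝ) else 0) ∂μ = (μ {ω' | z ≤ X j ω'}).toReal := by
    intro z j; rw [hind_eq]; exact integral_indicator_one (hmeas z j)
  have hp01 : ∀ (z : ℝ) (j : Fin n), (μ {ω' | z ≤ X j ω'}).toReal ≤ 1 := by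
    intro z j
    have h := prob_le_one (μ := μ) (s := {ω' | z ≤ X j ω'})
    simpa using ENNReal.toReal_mono ENNReal.one_ne_top h
  have hFint : ∀ (z : ℝ) (j : Fin n) (c : Prop) [Decidable c],
      Integrable (fun ω => if c then
        ((if z ≤ X j ω then (1:ℝ) else 0) - (μ {ω' | z ≤ X j ω'}).toReal) else 0) μ := by
    intro z j c _
    by_cases hc : c
    · simp only [if_pos hc]; exact (hint z j).sub (integrable_const _)
    · simp only [if_neg hc]; exact integrable_const 0
  have hFbd : ∀ (z : ℝ) (j : Fin n) (c : Prop) [Decidable c] (ω : Ω),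
      ‖(if c then ((if z ≤ X j ω then (1:ℝ) else 0) - (μ {ω' | z ≤ X j ω'}).toReal) else 0)‖ ≤ 1 := by
    intro z j c _ ω
    have h0 : 0 ≤ (μ {ω' | z ≤ X j ω'}).toReal := ENNReal.toReal_nonneg
    have h1 := hp01 z j
    rw [Real.norm_eq_abs, abs_le]
    split_ifs <;> constructor <;> linarith
  have hFmean : ∀ (z : ℝ) (j : Fin n) (c : Prop) [Decidable c],
      ∫ ω, (if c then ((if z ≤ X j ω then (1:ℝ) else 0) - (μ {ω' | z ≤ X j ω'}).toReal) else 0) ∂μ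
        = 0 := by
    intro z j c _
    by_cases hc : c
    · simp only [if_pos hc]
      rw [integral_sub (hint z j) (integrable_const _), hival, integral_const]
      simp
    · simp only [if_neg hc, integral_zero]
  have hFcomp : ∀ (z : ℝ) (j : Fin n) (c : Prop) [Decidable c], ∃ φ : ℝ → ℝ, Measurable φ ∧
      (fun ω => if c then ((if z ≤ X j ω then (1:ℝ) else 0) - (μ {ω' | z ≤ X j ω'}).toReal) else 0)
        = φ ∘ (X j) := by
    intro z j c _
    by_cases hc : c
    · refine ⟨fun t => (if z ≤ t then (1:ℝ) else 0) - (μ {ω' | z ≤ X j ω'}).toReal,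
        (Measurable.ite (measurableSet_Ici (a := z)) measurable_const measurable_const).sub
          measurable_const, ?_⟩
      funext ω; simp [hc, Function.comp]
    · exact ⟨fun _ => 0, measurable_const, by funext ω; simp [hc, Function.comp]⟩
  have hprod : ∀ (j k : Fin n),
      Integrable (fun ω =>
        (if (j : ℕ) < m₁ then
          ((if z₁ ≤ X j ω then (1:ℝ) else 0) - (μ {ω' | z₁ ≤ X j ω'}).toReal) else 0) *
        (if (k : ℕ) < m₂ then
          ((if z₂ ≤ X k ω then (1:ℝ) else 0) - (μ {ω' | z₂ ≤ X k ω'}).toReal) else 0)) μ := by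
    intro j k
    exact (hFint z₂ k _).bdd_mul (hFint z₁ j _).aestronglyMeasurable (Filter.Eventually.of_forall fun ω => hFbd z₁ j _ ω)
  have hcross : ∀ (j k : Fin n), j ≠ k →
      ∫ ω, (if (j : ℕ) < m₁ then
          ((if z₁ ≤ X j ω then (1:ℝ) else 0) - (μ {ω' | z₁ ≤ X j ω'}).toReal) else 0) *
        (if (k : ℕ) < m₂ then
          ((if z₂ ≤ X k ω then (1:ℝ) else 0) - (μ {ω' | z₂ ≤ X k ω'}).toReal) else 0) ∂μ = 0 := by
    intro j k hjk
    obtain ⟨φ, hφ, hφe⟩ := hFcomp z₁ j ((j : ℕ) < m₁)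
    obtain ⟨ψ, hψ, hψe⟩ := hFcomp z₂ k ((k : ℕ) < m₂)
    have hind2 : ProbabilityTheory.IndepFun
        (fun ω => if (j : ℕ) < m₁ then
          ((if z₁ ≤ X j ω then (1:ℝ) else 0) - (μ {ω' | z₁ ≤ X j ω'}).toReal) else 0)
        (fun ω => if (k : ℕ) < m₂ then
          ((if z₂ ≤ X k ω then (1:ℝ) else 0) - (μ {ω' | z₂ ≤ X k ω'}).toReal) else 0) μ := by
      rw [hφe, hψe]
      exact (hindep.indepFun hjk).comp hφ hψ
    have := hind2.integral_fun_mul_eq_mul_integral (hFint z₁ j _).aestronglyMeasurable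
      (hFint z₂ k _).aestronglyMeasurable
    rw [show (∫ ω, (if (j : ℕ) < m₁ then
          ((if z₁ ≤ X j ω then (1:ℝ) else 0) - (μ {ω' | z₁ ≤ X j ω'}).toReal) else 0) *
        (if (k : ℕ) < m₂ then
          ((if z₂ ≤ X k ω then (1:ℝ) else 0) - (μ {ω' | z₂ ≤ X k ω'}).toReal) else 0) ∂μ) = _
      from this, hFmean z₁ j _, zero_mul]
  have hdiag : ∀ j : Fin n,
      ∫ ω, (if (j : ℕ) < m₁ then
          ((if z₁ ≤ X j ω then (1:ℝ) else 0) - (μ {ω' | z₁ ≤ X j ω'}).toReal) else 0) *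
        (if (j : ℕ) < m₂ then
          ((if z₂ ≤ X j ω then (1:ℝ) else 0) - (μ {ω' | z₂ ≤ X j ω'}).toReal) else 0) ∂μ
      = if (j : ℕ) < min m₁ m₂ then
          (μ {ω' | max z₁ z₂ ≤ X j ω'}).toReal
            - (μ {ω' | z₁ ≤ X j ω'}).toReal * (μ {ω' | z₂ ≤ X j ω'}).toReal else 0 := by
    intro j
    by_cases hj1 : (j : ℕ) < m₁
    · by_cases hj2 : (j : ℕ) < m₂
      · rw [if_pos (lt_min hj1 hj2)]
        simp only [if_pos hj1, if_pos hj2]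
        have hexp : ∀ ω : Ω,
            ((if z₁ ≤ X j ω then (1:ℝ) else 0) - (μ {ω' | z₁ ≤ X j ω'}).toReal) *
            ((if z₂ ≤ X j ω then (1:ℝ) else 0) - (μ {ω' | z₂ ≤ X j ω'}).toReal)
            = ((if max z₁ z₂ ≤ X j ω then (1:ℝ) else 0)
                - (μ {ω' | z₂ ≤ X j ω'}).toReal * (if z₁ ≤ X j ω then (1:ℝ) else 0))
              - ((μ {ω' | z₁ ≤ X j ω'}).toReal * (if z₂ ≤ X j ω then (1:ℝ) else 0)
                - (μ {ω' | z₁ ≤ X j ω'}).toReal * (μ {ω' | z₂ ≤ X j ω'}).toReal) := by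
          intro ω
          by_cases h1 : z₁ ≤ X j ω <;> by_cases h2 : z₂ ≤ X j ω <;>
            simp [max_le_iff, h1, h2] <;> ring
        simp only [hexp]
        have iA : Integrable (fun ω => (if max z₁ z₂ ≤ X j ω then (1:ℝ) else 0)
            - (μ {ω' | z₂ ≤ X j ω'}).toReal * (if z₁ ≤ X j ω then (1:ℝ) else 0)) μ :=
          (hint (max z₁ z₂) j).sub ((hint z₁ j).const_mul _)
        have iB : Integrable (fun ω => (μ {ω' | z₁ ≤ X j ω'}).toReal * (if z₂ ≤ X j ω then (1:ℝ) else 0)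
            - (μ {ω' | z₁ ≤ X j ω'}).toReal * (μ {ω' | z₂ ≤ X j ω'}).toReal) μ :=
          ((hint z₂ j).const_mul _).sub (integrable_const _)
        rw [integral_sub iA iB,
            integral_sub (hint (max z₁ z₂) j) ((hint z₁ j).const_mul _),
            integral_sub ((hint z₂ j).const_mul _) (integrable_const _),
            integral_const_mul, integral_const_mul, hival, hival, hival, integral_const]
        simp only [measureReal_def, measure_univ, ENNReal.toReal_one, smul_eq_mul, one_mul]
        ring
      · rw [if_neg (by omega)]
        simp only [if_neg hj2, mul_zero, integral_zero]
    · rw [if_neg (by omega)]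
      simp only [if_neg hj1, zero_mul, integral_zero]
  simp_rw [Finset.sum_mul_sum]
  rw [integral_finset_sum _ (fun j _ => integrable_finset_sum _ (fun k _ => hprod j k))]
  refine Finset.sum_congr rfl fun j _ => ?_
  rw [integral_finset_sum _ (fun k _ => hprod j k)]
  rw [Finset.sum_eq_single_of_mem j (Finset.mem_univ j)
    (fun k _ hkj => hcross j k (Ne.symm hkj))]
  exact hdiag j

set_option maxHeartbeats 1000000 in
/-- For a tail-estimate triangular array with rowwise independent entries, the
covariance of the sequential empirical tail process
`G_n(θ,z) = (nΔ_n)^{-1/2} Σ_{j=1}^{⌊nθ⌋} (1_{X_{n,j} ≥ z} − P_n(X_{n,j} ≥ z))`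
(indexed here by `j : Fin n`, `j` being the 0-based index) converges to
`(θ₁ ∧ θ₂) · ν(z₁ ∨ z₂)`. -/
theorem stmt5 (a : ℝ) (ha : 0 < a) (ν : ℝ → ℝ)
    (hν0 : ∀ z, a ≤ z → 0 ≤ ν z) (hνmono : AntitoneOn ν (Set.Ici a))
    (Ω : ℕ → Type*) [∀ n, MeasurableSpace (Ω n)]
    (P : ∀ n, Measure (Ω n)) [∀ n, IsProbabilityMeasure (P n)]
    (Δ : ℕ → ℝ) (hΔpos : ∀ n, 0 < Δ n)
    (hΔ0 : Tendsto Δ atTop (nhds 0))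
    (hnΔ : Tendsto (fun n : ℕ => (n : ℝ) * Δ n) atTop atTop)
    (K : ℝ) (hK : 0 < K)
    (X : ∀ n, Fin n → Ω n → ℝ) (hX : ∀ n j, Measurable (X n j))
    (hindep : ∀ n, ProbabilityTheory.iIndepFun (X n) (P n))
    (htail : ∀ n : ℕ, 1 ≤ n → ∀ j : Fin n, ∀ z, a ≤ z →
      |((P n) {ω | z ≤ X n j ω}).toReal - Δ n * ν z| ≤ K * (Δ n) ^ 2)
    (θ₁ θ₂ : ℝ) (hθ₁ : θ₁ ∈ Set.Icc (0 : ℝ) 1) (hθ₂ : θ₂ ∈ Set.Icc (0 : ℝ) 1)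
    (z₁ z₂ : ℝ) (hz₁ : a ≤ z₁) (hz₂ : a ≤ z₂) :
    Tendsto (fun n : ℕ =>
      ∫ ω,
        ((Real.sqrt ((n : ℝ) * Δ n))⁻¹ * ∑ j : Fin n,
          (if (j : ℕ) < ⌊(n : ℝ) * θ₁⌋₊ then
            ((if z₁ ≤ X n j ω then (1 : ℝ) else 0) - ((P n) {ω' | z₁ ≤ X n j ω'}).toReal)
           else 0)) *
        ((Real.sqrt ((n : ℝ) * Δ n))⁻¹ * ∑ j : Fin n,
          (if (j : ℕ) < ⌊(n : ℝ) * θ₂⌋₊ then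
            ((if z₂ ≤ X n j ω then (1 : ℝ) else 0) - ((P n) {ω' | z₂ ≤ X n j ω'}).toReal)
           else 0)) ∂(P n))
      atTop (nhds (min θ₁ θ₂ * ν (max z₁ z₂))) := by
  have hza : a ≤ max z₁ z₂ := le_trans hz₁ (le_max_left _ _)
  have hνa : 0 ≤ ν a := hν0 a le_rfl
  -- generic finishing lemma
  have key0 : ∀ {f g : ℕ → ℝ} {L : ℝ}, Tendsto g atTop (nhds L) →
      Tendsto (fun n => f n - g n) atTop (nhds 0) → Tendsto f atTop (nhds L) := by
    intro f g L hg hd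
    have h := hg.add hd
    rw [add_zero] at h
    exact h.congr (fun n => by ring)
  -- convergence of ⌊kθ⌋/k
  have hfl : ∀ θ : ℝ, 0 ≤ θ → θ ≤ 1 →
      Tendsto (fun k : ℕ => (⌊(k : ℝ) * θ⌋₊ : ℝ) / k) atTop (nhds θ) := by
    intro θ h0 h1'
    have hlow : Tendsto (fun k : ℕ => θ - 1 / (k : ℝ)) atTop (nhds θ) := by
      simpa using (tendsto_const_nhds (x := θ)).sub tendsto_one_div_atTop_nhds_zero_nat
    refine tendsto_of_tendsto_of_tendsto_of_le_of_le' hlow tendsto_const_nhds ?_ ?_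
    · filter_upwards [eventually_ge_atTop 1] with k hk
      have hk0 : (0 : ℝ) < k := by exact_mod_cast hk
      rw [le_div_iff₀ hk0]
      have hlt := Nat.sub_one_lt_floor ((k : ℝ) * θ)
      have h2 : (θ - 1 / (k : ℝ)) * k = (k : ℝ) * θ - 1 := by field_simp
      rw [h2]
      exact hlt.le
    · filter_upwards [eventually_ge_atTop 1] with k hk
      have hk0 : (0 : ℝ) < k := by exact_mod_cast hk
      rw [div_le_iff₀ hk0]
      calc (⌊(k : ℝ) * θ⌋₊ : ℝ) ≤ (k : ℝ) * θ := Nat.floor_le (mul_nonneg hk0.le h0)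
      _ = θ * k := mul_comm _ _
  have hT : Tendsto (fun k : ℕ =>
      ((min ⌊(k : ℝ) * θ₁⌋₊ ⌊(k : ℝ) * θ₂⌋₊ : ℕ) : ℝ) / k * ν (max z₁ z₂)) atTop
      (nhds (min θ₁ θ₂ * ν (max z₁ z₂))) := by
    have h := ((hfl θ₁ hθ₁.1 hθ₁.2).min (hfl θ₂ hθ₂.1 hθ₂.2)).mul_const (ν (max z₁ z₂))
    refine h.congr fun k => ?_
    rw [Nat.cast_min, min_div_div_right (by positivity : (0:ℝ) ≤ (k:ℝ))]
  apply key0 hT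
  refine squeeze_zero_norm' (a := fun n => K * Δ n + Δ n * (ν a + K * Δ n) ^ 2) ?_ ?_
  · filter_upwards [eventually_ge_atTop 1] with n hn
    have hn0 : (0 : ℝ) < (n : ℝ) := by exact_mod_cast hn
    have hΔn := hΔpos n
    have hnΔ0 : (0 : ℝ) < (n : ℝ) * Δ n := mul_pos hn0 hΔn
    rw [Real.norm_eq_abs]
    simp only [mul_mul_mul_comm]
    rw [MeasureTheory.integral_const_mul,
      aux_cov (P n) (X n) (hX n) (hindep n) z₁ z₂ ⌊(n : ℝ) * θ₁⌋₊ ⌊(n : ℝ) * θ₂⌋₊,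
      ← mul_inv, Real.mul_self_sqrt hnΔ0.le]
    set m₁ := ⌊(n : ℝ) * θ₁⌋₊ with hm₁
    set m₂ := ⌊(n : ℝ) * θ₂⌋₊ with hm₂
    set M := min m₁ m₂ with hM
    have hMn : M ≤ n := by
      have h1 : m₁ ≤ n := by
        rw [hm₁]
        calc ⌊(n : ℝ) * θ₁⌋₊ ≤ ⌊(n : ℝ)⌋₊ :=
              Nat.floor_le_floor (by nlinarith [hθ₁.2, hn0.le])
        _ = n := Nat.floor_natCast n
      exact le_trans (min_le_left _ _) h1
    -- per-term bound
    have hterm : ∀ j : Fin n,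
        |(if (j : ℕ) < M then
            ((P n) {ω' | max z₁ z₂ ≤ X n j ω'}).toReal
              - ((P n) {ω' | z₁ ≤ X n j ω'}).toReal * ((P n) {ω' | z₂ ≤ X n j ω'}).toReal
              else 0) - (if (j : ℕ) < M then Δ n * ν (max z₁ z₂) else 0)|
          ≤ K * Δ n ^ 2 + (Δ n * ν a + K * Δ n ^ 2) ^ 2 := by
      intro j
      have hEpos : 0 ≤ Δ n * ν a + K * Δ n ^ 2 := by
        have := mul_nonneg hΔn.le hνa
        nlinarith [sq_nonneg (Δ n), hK.le]
      by_cases hj : (j : ℕ) < M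
      · simp only [if_pos hj]
        have h1 := htail n hn j (max z₁ z₂) hza
        have h2 := htail n hn j z₁ hz₁
        have h3 := htail n hn j z₂ hz₂
        have hν₁ : ν z₁ ≤ ν a := hνmono Set.self_mem_Ici (Set.mem_Ici.2 hz₁) hz₁
        have hν₂ : ν z₂ ≤ ν a := hνmono Set.self_mem_Ici (Set.mem_Ici.2 hz₂) hz₂
        have hp₁0 : 0 ≤ ((P n) {ω' | z₁ ≤ X n j ω'}).toReal := ENNReal.toReal_nonneg
        have hp₂0 : 0 ≤ ((P n) {ω' | z₂ ≤ X n j ω'}).toReal := ENNReal.toReal_nonneg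
        rw [abs_le] at h1 h2 h3
        have hE1 : ((P n) {ω' | z₁ ≤ X n j ω'}).toReal ≤ Δ n * ν a + K * Δ n ^ 2 := by
          linarith [mul_le_mul_of_nonneg_left hν₁ hΔn.le, h2.1, h2.2]
        have hE2 : ((P n) {ω' | z₂ ≤ X n j ω'}).toReal ≤ Δ n * ν a + K * Δ n ^ 2 := by
          linarith [mul_le_mul_of_nonneg_left hν₂ hΔn.le, h3.1, h3.2]
        have hPP : ((P n) {ω' | z₁ ≤ X n j ω'}).toReal * ((P n) {ω' | z₂ ≤ X n j ω'}).toReal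
            ≤ (Δ n * ν a + K * Δ n ^ 2) ^ 2 := by
          rw [pow_two]
          exact mul_le_mul hE1 hE2 hp₂0 hEpos
        rw [abs_le]
        constructor <;> linarith [mul_nonneg hp₁0 hp₂0, h1.1, h1.2]
      · simp only [if_neg hj, sub_zero, abs_zero]
        have := mul_nonneg hK.le (sq_nonneg (Δ n))
        linarith [sq_nonneg (Δ n * ν a + K * Δ n ^ 2)]
    have hcount : ∑ j : Fin n, (if (j : ℕ) < M then Δ n * ν (max z₁ z₂) else 0)
        = (M : ℝ) * (Δ n * ν (max z₁ z₂)) := by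
      rw [Fin.sum_univ_eq_sum_range (fun t => if t < M then Δ n * ν (max z₁ z₂) else 0) n,
        ← Finset.sum_filter]
      have hfil : (Finset.range n).filter (fun t => t < M) = Finset.range M := by
        ext x
        simp only [Finset.mem_filter, Finset.mem_range]
        omega
      rw [hfil, Finset.sum_const, Finset.card_range, nsmul_eq_mul]
    have hkey : ((n : ℝ) * Δ n)⁻¹ * (∑ j : Fin n, (if (j : ℕ) < M then
            ((P n) {ω' | max z₁ z₂ ≤ X n j ω'}).toReal
              - ((P n) {ω' | z₁ ≤ X n j ω'}).toReal * ((P n) {ω' | z₂ ≤ X n j ω'}).toReal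
              else 0)) - (M : ℝ) / n * ν (max z₁ z₂)
        = ((n : ℝ) * Δ n)⁻¹ * ∑ j : Fin n, ((if (j : ℕ) < M then
            ((P n) {ω' | max z₁ z₂ ≤ X n j ω'}).toReal
              - ((P n) {ω' | z₁ ≤ X n j ω'}).toReal * ((P n) {ω' | z₂ ≤ X n j ω'}).toReal
              else 0) - (if (j : ℕ) < M then Δ n * ν (max z₁ z₂) else 0)) := by
      rw [Finset.sum_sub_distrib, hcount]
      field_simp
    rw [hkey, abs_mul, abs_of_pos (inv_pos.2 hnΔ0)]
    have hD : |∑ j : Fin n, ((if (j : ℕ) < M then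
            ((P n) {ω' | max z₁ z₂ ≤ X n j ω'}).toReal
              - ((P n) {ω' | z₁ ≤ X n j ω'}).toReal * ((P n) {ω' | z₂ ≤ X n j ω'}).toReal
              else 0) - (if (j : ℕ) < M then Δ n * ν (max z₁ z₂) else 0))|
        ≤ (n : ℝ) * (K * Δ n ^ 2 + (Δ n * ν a + K * Δ n ^ 2) ^ 2) := by
      calc |∑ j : Fin n, _| ≤ ∑ j : Fin n, |_| := Finset.abs_sum_le_sum_abs _ _
      _ ≤ ∑ _j : Fin n, (K * Δ n ^ 2 + (Δ n * ν a + K * Δ n ^ 2) ^ 2) :=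
            Finset.sum_le_sum fun j _ => hterm j
      _ = (n : ℝ) * (K * Δ n ^ 2 + (Δ n * ν a + K * Δ n ^ 2) ^ 2) := by
            rw [Finset.sum_const, Finset.card_univ, Fintype.card_fin, nsmul_eq_mul]
    calc ((n : ℝ) * Δ n)⁻¹ * |_| ≤ ((n : ℝ) * Δ n)⁻¹ *
          ((n : ℝ) * (K * Δ n ^ 2 + (Δ n * ν a + K * Δ n ^ 2) ^ 2)) :=
          mul_le_mul_of_nonneg_left hD (inv_nonneg.2 hnΔ0.le)
    _ = K * Δ n + Δ n * (ν a + K * Δ n) ^ 2 := by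
          field_simp
  · have h1 : Tendsto (fun n => K * Δ n) atTop (nhds 0) := by
      simpa using hΔ0.const_mul K
    have h2 : Tendsto (fun n => Δ n * (ν a + K * Δ n) ^ 2) atTop (nhds 0) := by
      have h3 : Tendsto (fun n => (ν a + K * Δ n) ^ 2) atTop (nhds ((ν a + K * 0) ^ 2)) :=
        (tendsto_const_nhds.add (hΔ0.const_mul K)).pow 2
      simpa using hΔ0.mul h3
    simpa using h1.add h2
end

section
/- Define ρ_n²(θ_1,z_1;θ_2,z_2) := Σ_{j=1}^{n} E[ ( f_{n,j}(θ_1,z_1) − f_{n,j}(θ_2,z_2) )² ] with f_{n,j}(θ,z) := (nΔ_n)^{−1/2} · 1_{{j ≤ ⌊nθ⌋}} · 1_{{X_{n,j} ≥ z}}, and define ρ²(θ_1,z_1;θ_2,z_2) := (θ_1 ∧ θ_2)·( ν(z_1 ∧ z_2) − ν(z_1 ∨ z_2) ) + |θ_1 − θ_2| · ν(z_I), where z_I := z_2 if θ_1 ≤ θ_2 and z_I := z_1 otherwise. Then sup { |ρ_n²(θ_1,z_1;θ_2,z_2) − ρ²(θ_1,z_1;θ_2,z_2)| : θ_1, θ_2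 ∈ [0,1], z_1, z_2 ≥ a } → 0 as n → ∞. -/
open MeasureTheory Filter

lemma ind_int {Ω : Type*} [MeasurableSpace Ω] (P : Measure Ω) [IsProbabilityMeasure P]
    {X : Ω → ℝ} (hX : Measurable X) (z : ℝ) :
    Integrable (fun ω => if z ≤ X ω then (1:ℝ) else 0) P := by
  have hm : MeasurableSet {ω | z ≤ X ω} := measurableSet_le measurable_const hX
  have : (fun ω => if z ≤ X ω then (1:ℝ) else 0)
      = Set.indicator {ω | z ≤ X ω} (fun _ => 1) := by
    ext ω; simp [Set.indicator_apply, Set.mem_setOf_eq]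
  rw [this]
  exact (integrable_const 1).indicator hm

lemma ind_eval {Ω : Type*} [MeasurableSpace Ω] (P : Measure Ω) [IsProbabilityMeasure P]
    {X : Ω → ℝ} (hX : Measurable X) (z : ℝ) :
    ∫ ω, (if z ≤ X ω then (1:ℝ) else 0) ∂P = (P {ω | z ≤ X ω}).toReal := by
  have hm : MeasurableSet {ω | z ≤ X ω} := measurableSet_le measurable_const hX
  have : (fun ω => if z ≤ X ω then (1:ℝ) else 0)
      = Set.indicator {ω | z ≤ X ω} (fun _ => 1) := by
    ext ω; simp [Set.indicator_apply, Set.mem_setOf_eq]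
  rw [this, integral_indicator_const (1:ℝ) hm, smul_eq_mul, mul_one]
  rfl

lemma term_integral {Ω : Type*} [MeasurableSpace Ω] (P : Measure Ω) [IsProbabilityMeasure P]
    {X : Ω → ℝ} (hX : Measurable X) (c z₁ z₂ : ℝ) (A C : Prop) [Decidable A] [Decidable C] :
    ∫ ω, (c * ((if A then (1:ℝ) else 0) * (if z₁ ≤ X ω then (1:ℝ) else 0))
        - c * ((if C then (1:ℝ) else 0) * (if z₂ ≤ X ω then (1:ℝ) else 0))) ^ 2 ∂P
    = c ^ 2 * (if A ∧ C then (P {ω | min z₁ z₂ ≤ X ω}).toReal - (P {ω | max z₁ z₂ ≤ X ω}).toReal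
        else if A then (P {ω | z₁ ≤ X ω}).toReal
        else if C then (P {ω | z₂ ≤ X ω}).toReal else 0) := by
  by_cases hA : A <;> by_cases hC : C <;> simp only [hA, hC, if_true, if_false,
    and_true, and_false, true_and, false_and, one_mul, zero_mul, mul_zero, mul_one,
    sub_zero, zero_sub, sub_self]
  · have key : ∀ ω, (c * (if z₁ ≤ X ω then (1:ℝ) else 0)
        - c * (if z₂ ≤ X ω then (1:ℝ) else 0)) ^ 2
        = c ^ 2 * ((if min z₁ z₂ ≤ X ω then (1:ℝ) else 0)
            - (if max z₁ z₂ ≤ X ω then (1:ℝ) else 0)) := by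
      intro ω
      rcases le_total z₁ z₂ with h | h
      · rw [min_eq_left h, max_eq_right h]
        split_ifs <;> ring_nf <;> nlinarith
      · rw [min_eq_right h, max_eq_left h]
        split_ifs <;> ring_nf <;> nlinarith
    simp_rw [key]
    rw [integral_const_mul, integral_sub (ind_int P hX _) (ind_int P hX _),
      ind_eval P hX, ind_eval P hX]
  · have key : ∀ ω, (c * (if z₁ ≤ X ω then (1:ℝ) else 0)) ^ 2
        = c ^ 2 * (if z₁ ≤ X ω then (1:ℝ) else 0) := by
      intro ω; split_ifs <;> ring
    simp_rw [key]
    rw [integral_const_mul, ind_eval P hX]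
  · have key : ∀ ω, (-(c * (if z₂ ≤ X ω then (1:ℝ) else 0))) ^ 2
        = c ^ 2 * (if z₂ ≤ X ω then (1:ℝ) else 0) := by
      intro ω; split_ifs <;> ring
    simp_rw [key]
    rw [integral_const_mul, ind_eval P hX]
  · simp

lemma count_sum (n m₁ m₂ : ℕ) (hm₁ : m₁ ≤ n) (hm₂ : m₂ ≤ n) (A B C : ℝ) :
    (∑ j : Fin n, (if (j:ℕ) < m₁ ∧ (j:ℕ) < m₂ then A
        else if (j:ℕ) < m₁ then B else if (j:ℕ) < m₂ then C else 0))
    = (min m₁ m₂ : ℝ) * A + ((m₁ - min m₁ m₂ : ℕ) : ℝ) * B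
      + ((m₂ - min m₁ m₂ : ℕ) : ℝ) * C := by
  have key : ∀ j : ℕ, (if j < m₁ ∧ j < m₂ then A
        else if j < m₁ then B else if j < m₂ then C else 0)
      = (if j ∈ Finset.Ico 0 (min m₁ m₂) then A else 0)
        + (if j ∈ Finset.Ico m₂ m₁ then B else 0)
        + (if j ∈ Finset.Ico m₁ m₂ then C else 0) := by
    intro j
    simp only [Finset.mem_Ico, Nat.zero_le, true_and, lt_min_iff]
    split_ifs <;> try ring
    all_goals (exfalso; omega)
  rw [Fin.sum_univ_eq_sum_range (fun j => if j < m₁ ∧ j < m₂ then A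
        else if j < m₁ then B else if j < m₂ then C else 0) n]
  simp_rw [key, Finset.sum_add_distrib]
  have hr : ∀ (s : Finset ℕ) (c : ℝ),
      (∑ i ∈ Finset.range n, if i ∈ s then c else 0) = ((Finset.range n ∩ s).card : ℝ) * c := by
    intro s c
    rw [Finset.sum_ite_mem, Finset.sum_const, nsmul_eq_mul]
  rw [hr, hr, hr, Finset.range_eq_Ico, Finset.Ico_inter_Ico, Finset.Ico_inter_Ico,
    Finset.Ico_inter_Ico]
  have e1 : (Finset.Ico (0 ⊔ 0) (n ⊓ (m₁ ⊓ m₂))).card = m₁ ⊓ m₂ := by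
    rw [Nat.card_Ico]; omega
  have e2 : (Finset.Ico (0 ⊔ m₂) (n ⊓ m₁)).card = m₁ - m₁ ⊓ m₂ := by
    rw [Nat.card_Ico]; omega
  have e3 : (Finset.Ico (0 ⊔ m₁) (n ⊓ m₂)).card = m₂ - m₁ ⊓ m₂ := by
    rw [Nat.card_Ico]; omega
  rw [e1, e2, e3, Nat.cast_min]

set_option maxHeartbeats 1600000 in
/-- For a tail-estimate triangular array, the L²-semimetrics
`ρ_n²(θ₁,z₁;θ₂,z₂) = Σ_j E[(f_{n,j}(θ₁,z₁) − f_{n,j}(θ₂,z₂))²]` of the indicator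
processes `f_{n,j}(θ,z) = (nΔ_n)^{-1/2} 1_{j ≤ ⌊nθ⌋} 1_{X_{n,j} ≥ z}` (indexed here
by `j : Fin n`, `j` being the 0-based index) converge uniformly on
`([0,1] × [a,∞))²` to the limiting semimetric
`ρ²(θ₁,z₁;θ₂,z₂) = (θ₁∧θ₂)(ν(z₁∧z₂) − ν(z₁∨z₂)) + |θ₁−θ₂| ν(z_I)`,
where `z_I = z₂` if `θ₁ ≤ θ₂` and `z_I = z₁` otherwise. -/
theorem stmt8 (a : ℝ) (ha : 0 < a) (ν : ℝ → ℝ)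
    (hν0 : ∀ z, a ≤ z → 0 ≤ ν z) (hνmono : AntitoneOn ν (Set.Ici a))
    (Ω : ℕ → Type*) [∀ n, MeasurableSpace (Ω n)]
    (P : ∀ n, Measure (Ω n)) [∀ n, IsProbabilityMeasure (P n)]
    (Δ : ℕ → ℝ) (hΔpos : ∀ n, 0 < Δ n)
    (hΔ0 : Tendsto Δ atTop (nhds 0))
    (hnΔ : Tendsto (fun n : ℕ => (n : ℝ) * Δ n) atTop atTop)
    (K : ℝ) (hK : 0 < K)
    (X : ∀ n, Fin n → Ω n → ℝ) (hX : ∀ n j, Measurable (X n j))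
    (htail : ∀ n : ℕ, 1 ≤ n → ∀ j : Fin n, ∀ z, a ≤ z →
      |((P n) {ω | z ≤ X n j ω}).toReal - Δ n * ν z| ≤ K * (Δ n) ^ 2) :
    Tendsto (fun n : ℕ =>
      sSup {r : ℝ | ∃ θ₁, θ₁ ∈ Set.Icc (0 : ℝ) 1 ∧ ∃ θ₂, θ₂ ∈ Set.Icc (0 : ℝ) 1 ∧
        ∃ z₁, a ≤ z₁ ∧ ∃ z₂, a ≤ z₂ ∧
        r = |(∑ j : Fin n, ∫ ω,
                ((Real.sqrt ((n : ℝ) * Δ n))⁻¹ *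
                    ((if (j : ℕ) < ⌊(n : ℝ) * θ₁⌋₊ then (1 : ℝ) else 0) *
                      (if z₁ ≤ X n j ω then (1 : ℝ) else 0))
                  - (Real.sqrt ((n : ℝ) * Δ n))⁻¹ *
                    ((if (j : ℕ) < ⌊(n : ℝ) * θ₂⌋₊ then (1 : ℝ) else 0) *
                      (if z₂ ≤ X n j ω then (1 : ℝ) else 0))) ^ 2 ∂(P n))
              - (min θ₁ θ₂ * (ν (min z₁ z₂) - ν (max z₁ z₂))
                  + |θ₁ - θ₂| * ν (if θ₁ ≤ θ₂ then z₂ else z₁))|})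
      atTop (nhds 0) := by
  have hνa : 0 ≤ ν a := hν0 a le_rfl
  -- the uniform error bound
  set ε : ℕ → ℝ := fun n => 2 * K * Δ n + 3 * ν a / n with hε
  have hεnn : ∀ n : ℕ, 0 ≤ ε n := by
    intro n
    have h1 : 0 ≤ 2 * K * Δ n := mul_nonneg (by linarith) (hΔpos n).le
    have h2 : 0 ≤ 3 * ν a / n :=
      div_nonneg (by linarith) (Nat.cast_nonneg n)
    simp only [hε]
    linarith
  have hε0 : Tendsto ε atTop (nhds 0) := by
    have h1 : Tendsto (fun n => 2 * K * Δ n) atTop (nhds 0) := by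
      simpa using hΔ0.const_mul (2 * K)
    have h2 : Tendsto (fun n : ℕ => 3 * ν a / n) atTop (nhds 0) :=
      tendsto_const_div_atTop_nhds_zero_nat (3 * ν a)
    simpa using h1.add h2
  -- key bound for each n ≥ 1
  have key : ∀ n : ℕ, 1 ≤ n → ∀ θ₁ ∈ Set.Icc (0:ℝ) 1, ∀ θ₂ ∈ Set.Icc (0:ℝ) 1,
      ∀ z₁, a ≤ z₁ → ∀ z₂, a ≤ z₂ →
      |(∑ j : Fin n, ∫ ω,
                ((Real.sqrt ((n : ℝ) * Δ n))⁻¹ *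
                    ((if (j : ℕ) < ⌊(n : ℝ) * θ₁⌋₊ then (1 : ℝ) else 0) *
                      (if z₁ ≤ X n j ω then (1 : ℝ) else 0))
                  - (Real.sqrt ((n : ℝ) * Δ n))⁻¹ *
                    ((if (j : ℕ) < ⌊(n : ℝ) * θ₂⌋₊ then (1 : ℝ) else 0) *
                      (if z₂ ≤ X n j ω then (1 : ℝ) else 0))) ^ 2 ∂(P n))
              - (min θ₁ θ₂ * (ν (min z₁ z₂) - ν (max z₁ z₂))
                  + |θ₁ - θ₂| * ν (if θ₁ ≤ θ₂ then z₂ else z₁))| ≤ ε n := by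
    intro n hn θ₁ hθ₁ θ₂ hθ₂ z₁ hz₁ z₂ hz₂
    have hnpos : (0:ℝ) < n := by exact_mod_cast hn
    have hΔn := hΔpos n
    have hprod : (0:ℝ) < (n:ℝ) * Δ n := mul_pos hnpos hΔn
    set m₁ := ⌊(n : ℝ) * θ₁⌋₊ with hm₁def
    set m₂ := ⌊(n : ℝ) * θ₂⌋₊ with hm₂def
    have hc2 : ((Real.sqrt ((n : ℝ) * Δ n))⁻¹) ^ 2 = ((n:ℝ) * Δ n)⁻¹ := by
      rw [inv_pow, Real.sq_sqrt hprod.le]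
    -- abbreviations
    set T : Fin n → ℝ := fun j =>
      if (j:ℕ) < m₁ ∧ (j:ℕ) < m₂ then
        ((P n) {ω | min z₁ z₂ ≤ X n j ω}).toReal - ((P n) {ω | max z₁ z₂ ≤ X n j ω}).toReal
      else if (j:ℕ) < m₁ then ((P n) {ω | z₁ ≤ X n j ω}).toReal
      else if (j:ℕ) < m₂ then ((P n) {ω | z₂ ≤ X n j ω}).toReal else 0 with hT
    set U : Fin n → ℝ := fun j =>
      if (j:ℕ) < m₁ ∧ (j:ℕ) < m₂ then Δ n * (ν (min z₁ z₂) - ν (max z₁ z₂))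
      else if (j:ℕ) < m₁ then Δ n * ν z₁
      else if (j:ℕ) < m₂ then Δ n * ν z₂ else 0 with hU
    have hQ : (∑ j : Fin n, ∫ ω,
                ((Real.sqrt ((n : ℝ) * Δ n))⁻¹ *
                    ((if (j : ℕ) < m₁ then (1 : ℝ) else 0) *
                      (if z₁ ≤ X n j ω then (1 : ℝ) else 0))
                  - (Real.sqrt ((n : ℝ) * Δ n))⁻¹ *
                    ((if (j : ℕ) < m₂ then (1 : ℝ) else 0) *
                      (if z₂ ≤ X n j ω then (1 : ℝ) else 0))) ^ 2 ∂(P n))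
        = ((n:ℝ) * Δ n)⁻¹ * ∑ j : Fin n, T j := by
      rw [Finset.mul_sum]
      refine Finset.sum_congr rfl fun j _ => ?_
      rw [term_integral (P n) (hX n j) _ z₁ z₂ ((j:ℕ) < m₁) ((j:ℕ) < m₂), hc2, hT]
    -- per-term comparison
    have hminz : a ≤ min z₁ z₂ := le_min hz₁ hz₂
    have hmaxz : a ≤ max z₁ z₂ := le_trans hz₁ (le_max_left _ _)
    have hTU : ∀ j : Fin n, |T j - U j| ≤ 2 * K * Δ n ^ 2 := by
      intro j
      have hKΔ : 0 ≤ K * Δ n ^ 2 := mul_nonneg hK.le (sq_nonneg _)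
      simp only [hT, hU]
      split_ifs
      · have h1 := htail n hn j (min z₁ z₂) hminz
        have h2 := htail n hn j (max z₁ z₂) hmaxz
        have heq : ((P n) {ω | min z₁ z₂ ≤ X n j ω}).toReal
              - ((P n) {ω | max z₁ z₂ ≤ X n j ω}).toReal
              - Δ n * (ν (min z₁ z₂) - ν (max z₁ z₂))
            = (((P n) {ω | min z₁ z₂ ≤ X n j ω}).toReal - Δ n * ν (min z₁ z₂))
              - (((P n) {ω | max z₁ z₂ ≤ X n j ω}).toReal - Δ n * ν (max z₁ z₂)) := by ring
        rw [heq]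
        calc |_ - _| ≤ |_| + |_| := abs_sub _ _
          _ ≤ 2 * K * Δ n ^ 2 := by linarith
      · have h1 := htail n hn j z₁ hz₁
        calc |_| ≤ K * Δ n ^ 2 := h1
          _ ≤ 2 * K * Δ n ^ 2 := by linarith
      · have h1 := htail n hn j z₂ hz₂
        calc |_| ≤ K * Δ n ^ 2 := h1
          _ ≤ 2 * K * Δ n ^ 2 := by linarith
      · simpa using (by nlinarith [sq_nonneg (Δ n)] : (0:ℝ) ≤ 2 * K * Δ n ^ 2)
    have hsumTU : |(∑ j : Fin n, T j) - ∑ j : Fin n, U j| ≤ (n:ℝ) * (2 * K * Δ n ^ 2) := by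
      rw [← Finset.sum_sub_distrib]
      calc |∑ j : Fin n, (T j - U j)| ≤ ∑ j : Fin n, |T j - U j| :=
            Finset.abs_sum_le_sum_abs _ _
        _ ≤ (n:ℝ) * (2 * K * Δ n ^ 2) := by
            have := Finset.sum_le_card_nsmul Finset.univ (fun j => |T j - U j|)
              (2 * K * Δ n ^ 2) (fun j _ => hTU j)
            simpa [Finset.card_univ, nsmul_eq_mul] using this
    -- floor bounds
    have hm₁n : m₁ ≤ n := by
      have h : (n:ℝ) * θ₁ ≤ (n:ℝ) := mul_le_of_le_one_right hnpos.le hθ₁.2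
      calc m₁ ≤ ⌊(n:ℝ)⌋₊ := Nat.floor_le_floor h
        _ = n := Nat.floor_natCast n
    have hm₂n : m₂ ≤ n := by
      have h : (n:ℝ) * θ₂ ≤ (n:ℝ) := mul_le_of_le_one_right hnpos.le hθ₂.2
      calc m₂ ≤ ⌊(n:ℝ)⌋₊ := Nat.floor_le_floor h
        _ = n := Nat.floor_natCast n
    have hd₁ : |(m₁:ℝ) - (n:ℝ) * θ₁| ≤ 1 := by
      have h0 : 0 ≤ (n:ℝ) * θ₁ := mul_nonneg hnpos.le hθ₁.1
      have hfl := Nat.floor_le h0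
      have hfu := Nat.lt_floor_add_one ((n:ℝ) * θ₁)
      rw [abs_le]; constructor <;> [linarith; linarith]
    have hd₂ : |(m₂:ℝ) - (n:ℝ) * θ₂| ≤ 1 := by
      have h0 : 0 ≤ (n:ℝ) * θ₂ := mul_nonneg hnpos.le hθ₂.1
      have hfl := Nat.floor_le h0
      have hfu := Nat.lt_floor_add_one ((n:ℝ) * θ₂)
      rw [abs_le]; constructor <;> [linarith; linarith]
    -- ν bounds
    have hV1lo : 0 ≤ ν (min z₁ z₂) - ν (max z₁ z₂) :=
      sub_nonneg.mpr (hνmono hminz hmaxz (min_le_max))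
    have hV1hi : ν (min z₁ z₂) - ν (max z₁ z₂) ≤ ν a := by
      have h1 : ν (min z₁ z₂) ≤ ν a := hνmono (Set.mem_Ici.mpr le_rfl) hminz hminz
      have h2 : 0 ≤ ν (max z₁ z₂) := hν0 _ hmaxz
      linarith
    have hz₁lo : 0 ≤ ν z₁ := hν0 _ hz₁
    have hz₁hi : ν z₁ ≤ ν a := hνmono (Set.mem_Ici.mpr le_rfl) hz₁ hz₁
    have hz₂lo : 0 ≤ ν z₂ := hν0 _ hz₂
    have hz₂hi : ν z₂ ≤ ν a := hνmono (Set.mem_Ici.mpr le_rfl) hz₂ hz₂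
    -- sum of U
    have hsumU := count_sum n m₁ m₂ hm₁n hm₂n
      (Δ n * (ν (min z₁ z₂) - ν (max z₁ z₂))) (Δ n * ν z₁) (Δ n * ν z₂)
    -- second error term
    have hE2 : |((n:ℝ) * Δ n)⁻¹ * (∑ j : Fin n, U j)
        - (min θ₁ θ₂ * (ν (min z₁ z₂) - ν (max z₁ z₂))
            + |θ₁ - θ₂| * ν (if θ₁ ≤ θ₂ then z₂ else z₁))| ≤ 3 * ν a / n := by
      rw [hsumU]
      by_cases hθ : θ₁ ≤ θ₂
      · have hm12 : m₁ ≤ m₂ := Nat.floor_le_floor (by nlinarith)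
        have hmin : min m₁ m₂ = m₁ := min_eq_left hm12
        rw [if_pos hθ, min_eq_left hθ, abs_of_nonpos (by linarith : θ₁ - θ₂ ≤ 0), hmin,
          min_eq_left (show (m₁:ℝ) ≤ (m₂:ℝ) from Nat.cast_le.mpr hm12)]
        have hc1 : ((m₁ - m₁ : ℕ) : ℝ) = 0 := by simp
        have hc2' : ((m₂ - m₁ : ℕ) : ℝ) = (m₂:ℝ) - (m₁:ℝ) := Nat.cast_sub hm12
        rw [hc1, hc2']
        have heq : ((n:ℝ) * Δ n)⁻¹ * ((m₁:ℝ) * (Δ n * (ν (min z₁ z₂) - ν (max z₁ z₂)))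
              + 0 * (Δ n * ν z₁) + ((m₂:ℝ) - (m₁:ℝ)) * (Δ n * ν z₂))
            - (θ₁ * (ν (min z₁ z₂) - ν (max z₁ z₂)) + -(θ₁ - θ₂) * ν z₂)
          = (((m₁:ℝ) - (n:ℝ) * θ₁) * (ν (min z₁ z₂) - ν (max z₁ z₂))
              + ((((m₂:ℝ) - (n:ℝ) * θ₂)) - ((m₁:ℝ) - (n:ℝ) * θ₁)) * ν z₂) / n := by
          field_simp
          ring
        rw [heq]
        rw [abs_div, abs_of_pos hnpos]
        have hnum : |((m₁:ℝ) - (n:ℝ) * θ₁) * (ν (min z₁ z₂) - ν (max z₁ z₂))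
            + ((((m₂:ℝ) - (n:ℝ) * θ₂)) - ((m₁:ℝ) - (n:ℝ) * θ₁)) * ν z₂| ≤ 3 * ν a := by
          set d₁ := (m₁:ℝ) - (n:ℝ) * θ₁
          set d₂ := (m₂:ℝ) - (n:ℝ) * θ₂
          obtain ⟨hd₁l, hd₁r⟩ := abs_le.mp hd₁
          obtain ⟨hd₂l, hd₂r⟩ := abs_le.mp hd₂
          rw [abs_le]
          constructor <;> nlinarith
        calc _ ≤ (3 * ν a) / n := by gcongr
          _ = 3 * ν a / n := by ring
      · push_neg at hθ
        have hm21 : m₂ ≤ m₁ := Nat.floor_le_floor (by nlinarith)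
        have hmin : min m₁ m₂ = m₂ := min_eq_right hm21
        rw [if_neg (not_le.mpr hθ), min_eq_right hθ.le,
          abs_of_nonneg (by linarith : (0:ℝ) ≤ θ₁ - θ₂), hmin,
          min_eq_right (show (m₂:ℝ) ≤ (m₁:ℝ) from Nat.cast_le.mpr hm21)]
        have hc1 : ((m₂ - m₂ : ℕ) : ℝ) = 0 := by simp
        have hc2' : ((m₁ - m₂ : ℕ) : ℝ) = (m₁:ℝ) - (m₂:ℝ) := Nat.cast_sub hm21
        rw [hc1, hc2']
        have heq : ((n:ℝ) * Δ n)⁻¹ * ((m₂:ℝ) * (Δ n * (ν (min z₁ z₂) - ν (max z₁ z₂)))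
              + ((m₁:ℝ) - (m₂:ℝ)) * (Δ n * ν z₁) + 0 * (Δ n * ν z₂))
            - (θ₂ * (ν (min z₁ z₂) - ν (max z₁ z₂)) + (θ₁ - θ₂) * ν z₁)
          = (((m₂:ℝ) - (n:ℝ) * θ₂) * (ν (min z₁ z₂) - ν (max z₁ z₂))
              + ((((m₁:ℝ) - (n:ℝ) * θ₁)) - ((m₂:ℝ) - (n:ℝ) * θ₂)) * ν z₁) / n := by
          field_simp
          ring
        rw [heq]
        rw [abs_div, abs_of_pos hnpos]
        have hnum : |((m₂:ℝ) - (n:ℝ) * θ₂) * (ν (min z₁ z₂) - ν (max z₁ z₂))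
            + ((((m₁:ℝ) - (n:ℝ) * θ₁)) - ((m₂:ℝ) - (n:ℝ) * θ₂)) * ν z₁| ≤ 3 * ν a := by
          set d₁ := (m₁:ℝ) - (n:ℝ) * θ₁
          set d₂ := (m₂:ℝ) - (n:ℝ) * θ₂
          obtain ⟨hd₁l, hd₁r⟩ := abs_le.mp hd₁
          obtain ⟨hd₂l, hd₂r⟩ := abs_le.mp hd₂
          rw [abs_le]
          constructor <;> nlinarith
        calc _ ≤ (3 * ν a) / n := by gcongr
          _ = 3 * ν a / n := by ring
    -- put everything together
    rw [hQ]
    have hsplit : ((n:ℝ) * Δ n)⁻¹ * (∑ j : Fin n, T j)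
        - (min θ₁ θ₂ * (ν (min z₁ z₂) - ν (max z₁ z₂))
            + |θ₁ - θ₂| * ν (if θ₁ ≤ θ₂ then z₂ else z₁))
      = ((n:ℝ) * Δ n)⁻¹ * ((∑ j : Fin n, T j) - ∑ j : Fin n, U j)
        + (((n:ℝ) * Δ n)⁻¹ * (∑ j : Fin n, U j)
           - (min θ₁ θ₂ * (ν (min z₁ z₂) - ν (max z₁ z₂))
              + |θ₁ - θ₂| * ν (if θ₁ ≤ θ₂ then z₂ else z₁))) := by ring
    rw [hsplit]
    have hfirst : |((n:ℝ) * Δ n)⁻¹ * ((∑ j : Fin n, T j) - ∑ j : Fin n, U j)|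
        ≤ 2 * K * Δ n := by
      rw [abs_mul, abs_of_pos (inv_pos.mpr hprod)]
      have : ((n:ℝ) * Δ n)⁻¹ * ((n:ℝ) * (2 * K * Δ n ^ 2)) = 2 * K * Δ n := by
        field_simp
      calc ((n:ℝ) * Δ n)⁻¹ * |(∑ j : Fin n, T j) - ∑ j : Fin n, U j|
          ≤ ((n:ℝ) * Δ n)⁻¹ * ((n:ℝ) * (2 * K * Δ n ^ 2)) := by
            exact mul_le_mul_of_nonneg_left hsumTU (inv_pos.mpr hprod).le
        _ = 2 * K * Δ n := this
    calc |_| ≤ _ + _ := abs_add_le _ _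
      _ ≤ 2 * K * Δ n + 3 * ν a / n := add_le_add hfirst hE2
  -- squeeze
  refine tendsto_of_tendsto_of_tendsto_of_le_of_le' tendsto_const_nhds hε0 ?_ ?_
  · filter_upwards with n
    apply Real.sSup_nonneg
    rintro r ⟨θ₁, _, θ₂, _, z₁, _, z₂, _, rfl⟩
    exact abs_nonneg _
  · filter_upwards [eventually_ge_atTop 1] with n hn
    apply Real.sSup_le _ (hεnn n)
    rintro r ⟨θ₁, hθ₁, θ₂, hθ₂, z₁, hz₁, z₂, hz₂, rfl⟩
    exact key n hn θ₁ hθ₁ θ₂ hθ₂ z₁ hz₁ z₂ hz₂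
end
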